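/- For η ≥ 0, μ > 0, x > 0 and y ≥ 0, the moments are monotone in μ plus a correction: Q_{η,μ+1}(x,y) ≥ Q_{η,μ}(x,y), i.e. the inhomogeneous recurrence implies Q_{η,μ+1}(x,y) − Q_{η,μ}(x,y) = η Q_{η−1,μ+1}(x,y) + (y/x)^{μ/2} y^η e^{-x-y} I_μ(2√(xy)) ≥ 0. -/

import Mathlib

open Real MeasureTheory

/-- Modified Bessel function of the first kind `I_ν(z)` via its Maclaurin series. -/
noncomputable def besselI (ν z : ℝ) : ℝ :=
  (z / 2) ^ ν * ∑' n : ℕ, (z ^ 2 / 4) ^ n / (n.factorial * Real.Gamma (ν + n + 1))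

/-- Upper incomplete gamma function `Γ(a, y)`. -/
noncomputable def uGamma (a y : ℝ) : ℝ := ∫ t in Set.Ioi y, t ^ (a - 1) * Real.exp (-t)

/-- Regularized upper incomplete gamma function `Q_a(y) = Γ(a,y)/Γ(a)`. -/
noncomputable def regQ (a y : ℝ) : ℝ := uGamma a y / Real.Gamma a

/-- η-th moment of the partial non-central chi-squared distribution (Nuttall Q-function). -/
noncomputable def nuttallQ (η μ x y : ℝ) : ℝ :=
  x ^ ((1 - μ) / 2) *
    ∫ t in Set.Ioi y, t ^ (η + (μ - 1) / 2) * Real.exp (-t - x) *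
      besselI (μ - 1) (2 * Real.sqrt (x * t))

/-- Generalized Marcum Q-function. -/
noncomputable def marcumQ (μ x y : ℝ) : ℝ := nuttallQ 0 μ x y

/-- Complementary Marcum function `P_μ(x,y)`. -/
noncomputable def marcumP (μ x y : ℝ) : ℝ :=
  x ^ ((1 - μ) / 2) *
    ∫ t in Set.Ioc 0 y, t ^ ((μ - 1) / 2) * Real.exp (-t - x) *
      besselI (μ - 1) (2 * Real.sqrt (x * t))


open Set Filter

/-- Ratio-test summability for `x^n Γ(b+n) / (n! Γ(c+n))`. -/
lemma summable_aux {x b c : ℝ} (hx : 0 ≤ x) (hb : 0 < b) (hc : 0 < c) :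
    Summable (fun n : ℕ => x ^ n * Real.Gamma (b + n) / (n.factorial * Real.Gamma (c + n))) := by
  set f : ℕ → ℝ := fun n => x ^ n * Real.Gamma (b + n) / (n.factorial * Real.Gamma (c + n))
    with hf
  have hΓb : ∀ n : ℕ, 0 < Real.Gamma (b + n) := fun n => Real.Gamma_pos_of_pos (by positivity)
  have hΓc : ∀ n : ℕ, 0 < Real.Gamma (c + n) := fun n => Real.Gamma_pos_of_pos (by positivity)
  have hfnonneg : ∀ n, 0 ≤ f n := by
    intro n
    have h1 := hΓb n; have h2 := hΓc n
    have h3 : (0:ℝ) < n.factorial := by positivity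
    positivity
  have hratio : ∀ n : ℕ, f (n + 1) = (x * (b + n) / ((n + 1) * (c + n))) * f n := by
    intro n
    have h1 : Real.Gamma (b + (n + 1 : ℕ)) = (b + n) * Real.Gamma (b + n) := by
      push_cast
      rw [show b + ((n : ℝ) + 1) = (b + n) + 1 by ring, Real.Gamma_add_one (by positivity)]
    have h2 : Real.Gamma (c + (n + 1 : ℕ)) = (c + n) * Real.Gamma (c + n) := by
      push_cast
      rw [show c + ((n : ℝ) + 1) = (c + n) + 1 by ring, Real.Gamma_add_one (by positivity)]
    have h3 : ((n + 1).factorial : ℝ) = (n + 1) * n.factorial := by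
      rw [Nat.factorial_succ]; push_cast; ring
    have h4 : (0:ℝ) < n.factorial := by positivity
    have h5 := (hΓc n).ne'
    have h6 : ((n:ℝ) + 1) ≠ 0 := by positivity
    have h7 : (c + (n:ℝ)) ≠ 0 := by positivity
    simp only [hf]
    rw [h1, h2, h3, pow_succ]
    field_simp
  apply summable_of_ratio_norm_eventually_le (r := 1/2) (by norm_num)
  have hN : ∀ᶠ n : ℕ in atTop, b ≤ n ∧ 4 * x ≤ n := by
    filter_upwards [eventually_ge_atTop ⌈b⌉₊, eventually_ge_atTop ⌈4*x⌉₊] with n h1 h2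
    exact ⟨le_trans (Nat.le_ceil b) (by exact_mod_cast h1),
      le_trans (Nat.le_ceil (4*x)) (by exact_mod_cast h2)⟩
  filter_upwards [hN] with n ⟨hn1, hn2⟩
  have hfn := hfnonneg n
  have hr : x * (b + n) / ((n + 1) * (c + n)) ≤ 1/2 := by
    rw [div_le_iff₀ (by positivity)]
    nlinarith [mul_le_mul_of_nonneg_right hn2 (Nat.cast_nonneg (α := ℝ) n),
      mul_le_mul hn2 hn1 hb.le (Nat.cast_nonneg (α := ℝ) n), hc.le, Nat.cast_nonneg (α := ℝ) n]
  have hrn : 0 ≤ x * (b + n) / ((n + 1) * (c + n)) := by positivity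
  rw [hratio n, norm_of_nonneg (hfnonneg n), norm_of_nonneg (mul_nonneg hrn hfn)]
  calc x * (b + n) / ((n + 1) * (c + n)) * f n ≤ 1/2 * f n :=
        mul_le_mul_of_nonneg_right hr hfn
    _ = 1/2 * f n := rfl

/-- Summability of the Bessel-type series `u^n / (n! Γ(c+n))`. -/
lemma summable_aux2 {u c : ℝ} (hu : 0 ≤ u) (hc : 0 < c) :
    Summable (fun n : ℕ => u ^ n / (n.factorial * Real.Gamma (c + n))) := by
  have h := summable_aux (x := u) (b := 1) (c := c) hu one_pos hc
  refine Summable.of_nonneg_of_le (fun n => ?_) (fun n => ?_) h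
  · have := Real.Gamma_pos_of_pos (show (0:ℝ) < c + n by positivity)
    have h2 : (0:ℝ) < n.factorial := by positivity
    positivity
  · have hΓ := Real.Gamma_pos_of_pos (show (0:ℝ) < c + n by positivity)
    have h1 : Real.Gamma (1 + n) = n.factorial := by
      rw [show (1:ℝ) + n = (n:ℝ) + 1 by ring]
      exact_mod_cast Real.Gamma_nat_eq_factorial n
    rw [h1]
    gcongr
    exact le_mul_of_one_le_right (by positivity) (by exact_mod_cast Nat.one_le_iff_ne_zero.2 n.factorial_ne_zero)

lemma integrableOn_rpow_exp {a y : ℝ} (ha : 0 < a) (hy : 0 ≤ y) :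
    IntegrableOn (fun t : ℝ => t ^ (a - 1) * Real.exp (-t)) (Set.Ioi y) := by
  have h := (Real.GammaIntegral_convergent ha).mono_set (Set.Ioi_subset_Ioi hy)
  exact h.congr_fun (fun t _ => mul_comm _ _) measurableSet_Ioi

lemma uGamma_nonneg {a y : ℝ} (hy : 0 ≤ y) : 0 ≤ uGamma a y := by
  refine setIntegral_nonneg measurableSet_Ioi fun t ht => ?_
  have h0 : (0:ℝ) ≤ t := le_trans hy (le_of_lt ht)
  positivity

lemma uGamma_le_Gamma {a y : ℝ} (ha : 0 < a) (hy : 0 ≤ y) : uGamma a y ≤ Real.Gamma a := by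
  have h1 : uGamma a y = ∫ t in Set.Ioi y, Real.exp (-t) * t ^ (a - 1) := by
    unfold uGamma
    exact setIntegral_congr_fun measurableSet_Ioi fun t _ => mul_comm _ _
  rw [h1, Real.Gamma_eq_integral ha]
  refine setIntegral_mono_set (Real.GammaIntegral_convergent ha) ?_ ?_
  · filter_upwards [self_mem_ae_restrict measurableSet_Ioi] with t ht
    have : (0:ℝ) ≤ t := le_of_lt ht
    positivity
  · exact HasSubset.Subset.eventuallyLE (Set.Ioi_subset_Ioi hy)

lemma uGamma_add_one {a y : ℝ} (ha : 0 < a) (hy : 0 ≤ y) :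
    uGamma (a + 1) y = a * uGamma a y + y ^ a * Real.exp (-y) := by
  have hint1 : IntegrableOn (fun t : ℝ => t ^ (a - 1) * Real.exp (-t)) (Set.Ioi y) :=
    integrableOn_rpow_exp ha hy
  have hint2 : IntegrableOn (fun t : ℝ => t ^ a * Real.exp (-t)) (Set.Ioi y) := by
    have := integrableOn_rpow_exp (a := a + 1) (by linarith) hy
    simpa using this
  have key : (∫ t in Set.Ioi y, (t ^ a * Real.exp (-t) - a * (t ^ (a - 1) * Real.exp (-t))))
      = 0 - (-(y ^ a * Real.exp (-y))) := by
    refine integral_Ioi_of_hasDerivAt_of_tendsto (f := fun t : ℝ => -(t ^ a * Real.exp (-t))) ?_ ?_ ?_ ?_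
    · -- continuity of fun t => -(t^a * exp (-t)) at y within Ici y
      refine ContinuousAt.continuousWithinAt ?_
      exact ((Real.continuousAt_rpow_const y a (Or.inr ha.le)).mul
        ((Real.continuous_exp.comp continuous_neg).continuousAt)).neg
    · intro t ht
      have ht0 : (0:ℝ) < t := lt_of_le_of_lt hy ht
      have h1 : HasDerivAt (fun t : ℝ => t ^ a) (a * t ^ (a - 1)) t :=
        Real.hasDerivAt_rpow_const (Or.inl ht0.ne')
      have h2 : HasDerivAt (fun t : ℝ => Real.exp (-t)) (-Real.exp (-t)) t := by
        exact ((Real.hasDerivAt_exp (-t)).comp t (hasDerivAt_neg t)).congr_deriv (by ring)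
      have : HasDerivAt (fun t : ℝ => -(t ^ a * Real.exp (-t)))
          (-(a * t ^ (a - 1) * Real.exp (-t) + t ^ a * -Real.exp (-t))) t := (h1.mul h2).neg
      exact this.congr_deriv (by ring)
    · exact (hint2.sub (hint1.const_mul a))
    · have h := tendsto_rpow_mul_exp_neg_mul_atTop_nhds_zero a 1 one_pos
      have h2 : Filter.Tendsto (fun t : ℝ => -(t ^ a * Real.exp (-t))) Filter.atTop (nhds (-0)) := by
        refine Filter.Tendsto.neg ?_
        refine h.congr fun t => ?_
        norm_num
      simpa using h2
  rw [MeasureTheory.integral_sub hint2 (hint1.const_mul a), MeasureTheory.integral_const_mul] at key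
  have h3 : uGamma (a + 1) y = ∫ t in Set.Ioi y, t ^ a * Real.exp (-t) := by
    unfold uGamma; norm_num
  rw [h3]
  unfold uGamma
  linarith [key]

lemma besselI_sqrt (ν u : ℝ) (hu : 0 ≤ u) :
    besselI ν (2 * Real.sqrt u)
      = Real.sqrt u ^ ν * ∑' n : ℕ, u ^ n / (n.factorial * Real.Gamma (ν + n + 1)) := by
  unfold besselI
  congr 1
  · congr 1
    ring
  · refine tsum_congr fun n => ?_
    congr 2
    rw [mul_pow, Real.sq_sqrt hu]
    norm_num

lemma besselI_nonneg (ν u : ℝ) (hν : 0 < ν) (hu : 0 ≤ u) :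
    0 ≤ besselI ν (2 * Real.sqrt u) := by
  rw [besselI_sqrt ν u hu]
  refine mul_nonneg (Real.rpow_nonneg (Real.sqrt_nonneg u) ν) (tsum_nonneg fun n => ?_)
  have hΓ : 0 < Real.Gamma (ν + n + 1) := Real.Gamma_pos_of_pos (by positivity)
  have h2 : (0:ℝ) < n.factorial := by positivity
  positivity

lemma nuttallQ_eq_tsum {η μ x y : ℝ} (hημ : 0 < η + μ) (hμ : 0 < μ) (hx : 0 < x) (hy : 0 ≤ y) :
    nuttallQ η μ x y = ∑' n : ℕ,
      Real.exp (-x) * x ^ n / (n.factorial * Real.Gamma (μ + n)) * uGamma (η + μ + n) y := by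
  set c : ℕ → ℝ := fun n => Real.exp (-x) * x ^ n / (n.factorial * Real.Gamma (μ + n)) with hc
  have hΓμ : ∀ n : ℕ, 0 < Real.Gamma (μ + n) := fun n => Real.Gamma_pos_of_pos (by positivity)
  have hcn : ∀ n, 0 ≤ c n := by
    intro n
    have h1 := hΓμ n
    have h2 : (0:ℝ) < n.factorial := by positivity
    have h3 := hx.le
    positivity
  have hpos : ∀ n : ℕ, (0:ℝ) < η + μ + n := fun n => by
    have := Nat.cast_nonneg (α := ℝ) n; linarith
  set F : ℕ → ℝ → ℝ := fun n t => c n * (t ^ (η + μ + n - 1) * Real.exp (-t)) with hF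
  have hFint : ∀ n, IntegrableOn (F n) (Set.Ioi y) := fun n =>
    (integrableOn_rpow_exp (hpos n) hy).const_mul (c n)
  have hnorm : ∀ n, (∫ t in Set.Ioi y, ‖F n t‖) = c n * uGamma (η + μ + n) y := by
    intro n
    have h1 : Set.EqOn (fun t => ‖F n t‖) (F n) (Set.Ioi y) := by
      intro t ht
      have ht0 : (0:ℝ) ≤ t := le_trans hy (le_of_lt ht)
      have := hcn n
      simp only [hF, norm_of_nonneg (by positivity : (0:ℝ) ≤ c n * (t ^ (η + μ + n - 1) * Real.exp (-t)))]
    rw [setIntegral_congr_fun measurableSet_Ioi h1]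
    simp only [hF]
    rw [MeasureTheory.integral_const_mul]
    rfl
  have hsum : Summable (fun n => ∫ t in Set.Ioi y, ‖F n t‖) := by
    refine Summable.of_nonneg_of_le (fun n => ?_) (fun n => ?_)
      ((summable_aux (x := x) (b := η + μ) (c := μ) hx.le hημ hμ).mul_left (Real.exp (-x)))
    · rw [hnorm n]; exact mul_nonneg (hcn n) (uGamma_nonneg hy)
    · rw [hnorm n, hc]
      have h1 := uGamma_le_Gamma (hpos n) hy
      have h2 : (0:ℝ) < n.factorial := by positivity
      have h3 := hΓμ n
      rw [show Real.exp (-x) * (x ^ n * Real.Gamma (η + μ + n) / (n.factorial * Real.Gamma (μ + n)))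
          = (Real.exp (-x) * x ^ n / (n.factorial * Real.Gamma (μ + n))) * Real.Gamma (η + μ + n) by ring]
      exact mul_le_mul_of_nonneg_left h1 (hcn n)
  have key : ∑' n, (∫ t in Set.Ioi y, F n t) = ∫ t in Set.Ioi y, ∑' n, F n t :=
    MeasureTheory.integral_tsum_of_summable_integral_norm hFint hsum
  have hpt : Set.EqOn
      (fun t => x ^ ((1 - μ) / 2) * (t ^ (η + (μ - 1) / 2) * Real.exp (-t - x) *
        besselI (μ - 1) (2 * Real.sqrt (x * t)))) (fun t => ∑' n, F n t) (Set.Ioi y) := by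
    intro t ht
    have ht0 : (0:ℝ) < t := lt_of_le_of_lt hy ht
    have hxt : (0:ℝ) ≤ x * t := by positivity
    simp only
    rw [besselI_sqrt _ _ hxt]
    have hs : Real.sqrt (x * t) ^ (μ - 1) = x ^ ((μ - 1) / 2) * t ^ ((μ - 1) / 2) := by
      rw [Real.sqrt_eq_rpow, ← Real.rpow_mul hxt, Real.mul_rpow hx.le ht0.le,
        show 1 / 2 * (μ - 1) = (μ - 1) / 2 by ring]
    rw [hs]
    have e1 : x ^ ((1 - μ) / 2) * x ^ ((μ - 1) / 2) = 1 := by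
      rw [← Real.rpow_add hx, show (1 - μ) / 2 + (μ - 1) / 2 = 0 by ring, Real.rpow_zero]
    have e5 : t ^ (η + (μ - 1) / 2) * t ^ ((μ - 1) / 2) = t ^ (η + μ - 1) := by
      rw [← Real.rpow_add ht0]
      congr 1; ring
    have e3 : Real.exp (-t - x) = Real.exp (-t) * Real.exp (-x) := by
      rw [sub_eq_add_neg, Real.exp_add]
    have hK : x ^ ((1 - μ) / 2) * (t ^ (η + (μ - 1) / 2) * Real.exp (-t - x) *
        (x ^ ((μ - 1) / 2) * t ^ ((μ - 1) / 2)))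
        = t ^ (η + μ - 1) * (Real.exp (-t) * Real.exp (-x)) := by
      rw [show x ^ ((1 - μ) / 2) * (t ^ (η + (μ - 1) / 2) * Real.exp (-t - x) *
          (x ^ ((μ - 1) / 2) * t ^ ((μ - 1) / 2)))
          = (x ^ ((1 - μ) / 2) * x ^ ((μ - 1) / 2)) *
            (t ^ (η + (μ - 1) / 2) * t ^ ((μ - 1) / 2)) * Real.exp (-t - x) by ring,
        e1, e5, e3]
      ring
    calc x ^ ((1 - μ) / 2) * (t ^ (η + (μ - 1) / 2) * Real.exp (-t - x) *
          (x ^ ((μ - 1) / 2) * t ^ ((μ - 1) / 2) *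
            ∑' n : ℕ, (x * t) ^ n / (n.factorial * Real.Gamma (μ - 1 + n + 1))))
        = (t ^ (η + μ - 1) * (Real.exp (-t) * Real.exp (-x))) *
            ∑' n : ℕ, (x * t) ^ n / (n.factorial * Real.Gamma (μ - 1 + n + 1)) := by
          rw [← hK]; ring
      _ = ∑' n : ℕ, (t ^ (η + μ - 1) * (Real.exp (-t) * Real.exp (-x))) *
            ((x * t) ^ n / (n.factorial * Real.Gamma (μ - 1 + n + 1))) := tsum_mul_left.symm
      _ = ∑' n, F n t := by
          refine tsum_congr fun n => ?_
          simp only [hF, hc]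
          rw [show μ - 1 + (n : ℝ) + 1 = μ + n by ring, mul_pow]
          have e6 : t ^ (η + μ - 1) * t ^ n = t ^ (η + μ + n - 1) := by
            rw [← Real.rpow_natCast t n, ← Real.rpow_add ht0]
            congr 1; ring
          rw [← e6]
          have := (hΓμ n).ne'
          have h2 : ((n.factorial : ℝ)) ≠ 0 := by positivity
          field_simp
  calc nuttallQ η μ x y
      = ∫ t in Set.Ioi y, x ^ ((1 - μ) / 2) * (t ^ (η + (μ - 1) / 2) * Real.exp (-t - x) *
          besselI (μ - 1) (2 * Real.sqrt (x * t))) := (MeasureTheory.integral_const_mul _ _).symm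
    _ = ∫ t in Set.Ioi y, ∑' n, F n t := setIntegral_congr_fun measurableSet_Ioi hpt
    _ = ∑' n, ∫ t in Set.Ioi y, F n t := key.symm
    _ = ∑' n, c n * uGamma (η + μ + n) y := by
        refine tsum_congr fun n => ?_
        simp only [hF]
        rw [MeasureTheory.integral_const_mul]
        rfl

lemma summable_term {x b c y : ℝ} (hx : 0 ≤ x) (hb : 0 < b) (hc : 0 < c) (hy : 0 ≤ y) :
    Summable (fun n : ℕ =>
      Real.exp (-x) * x ^ n / (n.factorial * Real.Gamma (c + n)) * uGamma (b + n) y) := by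
  have hΓc : ∀ n : ℕ, 0 < Real.Gamma (c + n) := fun n => Real.Gamma_pos_of_pos (by positivity)
  have hbn : ∀ n : ℕ, (0:ℝ) < b + n := fun n => by
    have := Nat.cast_nonneg (α := ℝ) n; linarith
  refine Summable.of_nonneg_of_le (fun n => ?_) (fun n => ?_)
    ((summable_aux (x := x) (b := b) (c := c) hx hb hc).mul_left (Real.exp (-x)))
  · have h1 := hΓc n
    have h2 : (0:ℝ) < n.factorial := by positivity
    have h3 := uGamma_nonneg (a := b + n) hy
    positivity
  · have h1 := uGamma_le_Gamma (hbn n) hy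
    have h2 : (0:ℝ) < n.factorial := by positivity
    have h3 := hΓc n
    rw [show Real.exp (-x) * (x ^ n * Real.Gamma (b + n) / (n.factorial * Real.Gamma (c + n)))
        = (Real.exp (-x) * x ^ n / (n.factorial * Real.Gamma (c + n))) * Real.Gamma (b + n) by ring]
    exact mul_le_mul_of_nonneg_left h1 (by
      have := Real.exp_nonneg (-x)
      positivity)

lemma boundary_eq {η μ x y : ℝ} (hη : 0 ≤ η) (hμ : 0 < μ) (hx : 0 < x) (hy : 0 ≤ y) :
    (Summable fun n : ℕ => Real.exp (-x) * x ^ n / (n.factorial * Real.Gamma (μ + 1 + n)) *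
        (y ^ (η + μ + n) * Real.exp (-y))) ∧
      (∑' n : ℕ, Real.exp (-x) * x ^ n / (n.factorial * Real.Gamma (μ + 1 + n)) *
          (y ^ (η + μ + n) * Real.exp (-y)))
        = (y / x) ^ (μ / 2) * y ^ η * Real.exp (-x - y) * besselI μ (2 * Real.sqrt (x * y)) := by
  have hΓ : ∀ n : ℕ, 0 < Real.Gamma (μ + 1 + n) := fun n => Real.Gamma_pos_of_pos (by positivity)
  rcases eq_or_lt_of_le hy with rfl | hy'
  · have hz : ∀ n : ℕ, Real.exp (-x) * x ^ n / (n.factorial * Real.Gamma (μ + 1 + n)) *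
        ((0:ℝ) ^ (η + μ + n) * Real.exp (-(0:ℝ))) = 0 := by
      intro n
      rw [Real.zero_rpow (by have := Nat.cast_nonneg (α := ℝ) n; positivity)]
      ring
    constructor
    · exact (summable_zero).congr fun n => (hz n).symm
    · rw [tsum_congr hz, tsum_zero, zero_div, Real.zero_rpow (by positivity : μ / 2 ≠ 0)]
      ring
  · -- y > 0
    have hxy : (0:ℝ) ≤ x * y := by positivity
    set C : ℝ := Real.exp (-x) * Real.exp (-y) * y ^ (η + μ) with hC
    have hterm : ∀ n : ℕ, Real.exp (-x) * x ^ n / (n.factorial * Real.Gamma (μ + 1 + n)) *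
        (y ^ (η + μ + n) * Real.exp (-y)) = C * ((x * y) ^ n / (n.factorial * Real.Gamma (μ + 1 + n))) := by
      intro n
      have hyn : y ^ (η + μ + n) = y ^ (η + μ) * y ^ n := by
        rw [← Real.rpow_natCast y n, ← Real.rpow_add hy']
      rw [hyn, hC, mul_pow]
      have := (hΓ n).ne'
      have h2 : ((n.factorial : ℝ)) ≠ 0 := by positivity
      field_simp
    have hsum2 := (summable_aux2 (u := x * y) (c := μ + 1) hxy (by positivity)).mul_left C
    constructor
    · exact hsum2.congr fun n => (hterm n).symm
    · rw [tsum_congr hterm, tsum_mul_left]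
      rw [besselI_sqrt μ (x * y) hxy]
      have hSS : (∑' n : ℕ, (x * y) ^ n / (n.factorial * Real.Gamma (μ + n + 1)))
          = ∑' n : ℕ, (x * y) ^ n / (n.factorial * Real.Gamma (μ + 1 + n)) := by
        refine tsum_congr fun n => ?_
        rw [show μ + (n:ℝ) + 1 = μ + 1 + n by ring]
      rw [hSS]
      have hsq : Real.sqrt (x * y) ^ μ = x ^ (μ / 2) * y ^ (μ / 2) := by
        rw [Real.sqrt_eq_rpow, ← Real.rpow_mul hxy, Real.mul_rpow hx.le hy'.le,
          show 1 / 2 * μ = μ / 2 by ring]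
      have hdiv : (y / x) ^ (μ / 2) = y ^ (μ / 2) / x ^ (μ / 2) :=
        Real.div_rpow hy'.le hx.le _
      have hexp : Real.exp (-x - y) = Real.exp (-x) * Real.exp (-y) := by
        rw [sub_eq_add_neg, Real.exp_add]
      have hyy : y ^ (μ / 2) * y ^ (μ / 2) = y ^ μ := by
        rw [← Real.rpow_add hy']; congr 1; ring
      have hyημ : y ^ η * y ^ μ = y ^ (η + μ) := by
        rw [← Real.rpow_add hy']
      have hxne : x ^ (μ / 2) ≠ 0 := (Real.rpow_pos_of_pos hx _).ne'
      rw [hC, hsq, hdiv, hexp, ← hyημ, ← hyy]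
      field_simp

theorem nuttallQ_mono_in_mu (η μ x y : ℝ) (hη : 0 ≤ η) (hμ : 0 < μ) (hx : 0 < x) (hy : 0 ≤ y) :
    nuttallQ η μ x y ≤ nuttallQ η (μ + 1) x y ∧
      nuttallQ η (μ + 1) x y - nuttallQ η μ x y =
        η * nuttallQ (η - 1) (μ + 1) x y +
          (y / x) ^ (μ / 2) * y ^ η * Real.exp (-x - y) * besselI μ (2 * Real.sqrt (x * y)) ∧
      0 ≤ η * nuttallQ (η - 1) (μ + 1) x y +
          (y / x) ^ (μ / 2) * y ^ η * Real.exp (-x - y) * besselI μ (2 * Real.sqrt (x * y)) := by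
  have hμ1 : (0:ℝ) < μ + 1 := by linarith
  have hημ : (0:ℝ) < η + μ := by linarith
  have hΓμ : ∀ n : ℕ, 0 < Real.Gamma (μ + n) := fun n => Real.Gamma_pos_of_pos (by positivity)
  have hΓμ1 : ∀ n : ℕ, 0 < Real.Gamma (μ + 1 + n) := fun n => Real.Gamma_pos_of_pos (by positivity)
  have hpos : ∀ n : ℕ, (0:ℝ) < η + μ + n := fun n => by
    have := Nat.cast_nonneg (α := ℝ) n; linarith
  set S1 : ℕ → ℝ := fun n =>
    Real.exp (-x) * x ^ n / (n.factorial * Real.Gamma (μ + n)) * uGamma (η + μ + n) y with hS1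
  set S2 : ℕ → ℝ := fun n =>
    Real.exp (-x) * x ^ n / (n.factorial * Real.Gamma (μ + 1 + n)) * uGamma (η + μ + n) y with hS2
  set S3 : ℕ → ℝ := fun n =>
    Real.exp (-x) * x ^ n / (n.factorial * Real.Gamma (μ + 1 + n)) *
      (y ^ (η + μ + n) * Real.exp (-y)) with hS3
  have hQ1 : nuttallQ η μ x y = ∑' n, S1 n := nuttallQ_eq_tsum hημ hμ hx hy
  have hQ2 : nuttallQ η (μ + 1) x y = ∑' n : ℕ,
      Real.exp (-x) * x ^ n / (n.factorial * Real.Gamma (μ + 1 + n)) * uGamma (η + (μ + 1) + n) y :=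
    nuttallQ_eq_tsum (by linarith) hμ1 hx hy
  have hQ3 : nuttallQ (η - 1) (μ + 1) x y = ∑' n, S2 n := by
    rw [nuttallQ_eq_tsum (by linarith : (0:ℝ) < η - 1 + (μ + 1)) hμ1 hx hy]
    refine tsum_congr fun n => ?_
    rw [show η - 1 + (μ + 1) + (n:ℝ) = η + μ + n by ring]
  have hsum1 : Summable S1 := summable_term hx.le hημ hμ hy
  have hsum2 : Summable S2 := summable_term hx.le hημ hμ1 hy
  obtain ⟨hsum3, hbd⟩ := boundary_eq hη hμ hx hy
  have hterm : ∀ n : ℕ,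
      Real.exp (-x) * x ^ n / (n.factorial * Real.Gamma (μ + 1 + n)) * uGamma (η + (μ + 1) + n) y
        = S1 n + η * S2 n + S3 n := by
    intro n
    have hg : Real.Gamma (μ + 1 + n) = (μ + n) * Real.Gamma (μ + n) := by
      rw [show μ + 1 + (n:ℝ) = (μ + n) + 1 by ring, Real.Gamma_add_one (by positivity : (μ + (n:ℝ)) ≠ 0)]
    have hu : uGamma (η + (μ + 1) + n) y
        = (η + μ + n) * uGamma (η + μ + n) y + y ^ (η + μ + n) * Real.exp (-y) := by
      rw [show η + (μ + 1) + (n:ℝ) = (η + μ + n) + 1 by ring]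
      exact uGamma_add_one (hpos n) hy
    simp only [hS1, hS2, hS3]
    rw [hu, hg]
    have h1 : (0:ℝ) < μ + n := by positivity
    have h2 := (hΓμ n).ne'
    have h3 : ((n.factorial : ℝ)) ≠ 0 := by positivity
    field_simp
    ring
  have hQ2' : nuttallQ η (μ + 1) x y = (∑' n, S1 n) + η * (∑' n, S2 n) + (∑' n, S3 n) := by
    rw [hQ2, tsum_congr hterm,
      Summable.tsum_add (hsum1.add (hsum2.mul_left η)) hsum3,
      Summable.tsum_add hsum1 (hsum2.mul_left η), tsum_mul_left]
  have heq : nuttallQ η (μ + 1) x y - nuttallQ η μ x y =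
      η * nuttallQ (η - 1) (μ + 1) x y +
        (y / x) ^ (μ / 2) * y ^ η * Real.exp (-x - y) * besselI μ (2 * Real.sqrt (x * y)) := by
    rw [hQ2', hQ1, hQ3, hbd]; ring
  have hnn1 : 0 ≤ nuttallQ (η - 1) (μ + 1) x y := by
    rw [hQ3]
    refine tsum_nonneg fun n => ?_
    have h1 := hΓμ1 n
    have h2 : (0:ℝ) < n.factorial := by positivity
    have h3 := uGamma_nonneg (a := η + μ + n) hy
    have h4 := hx.le
    simp only [hS2]
    positivity
  have hnn2 : 0 ≤ (y / x) ^ (μ / 2) * y ^ η * Real.exp (-x - y) * besselI μ (2 * Real.sqrt (x * y)) := by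
    have hb := besselI_nonneg μ (x * y) hμ (by positivity)
    have h1 : (0:ℝ) ≤ y / x := by positivity
    have h2 : (0:ℝ) ≤ (y / x) ^ (μ / 2) := Real.rpow_nonneg h1 _
    have h3 : (0:ℝ) ≤ y ^ η := Real.rpow_nonneg hy _
    positivity
  have hnn : 0 ≤ η * nuttallQ (η - 1) (μ + 1) x y +
      (y / x) ^ (μ / 2) * y ^ η * Real.exp (-x - y) * besselI μ (2 * Real.sqrt (x * y)) :=
    add_nonneg (mul_nonneg hη hnn1) hnn2
  exact ⟨by linarith [heq, hnn], heq, hnn⟩
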